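/- arXiv:2502.08790 — 2 statements merged into one kernel-verified Lean document; each statement's English description precedes it below -/
import Mathlib

section
/- For each s > 0 and F(s) ∈ [0,1], the function φ_s(x) = exp(−(1−x)(s/(1−F(s)x) + 1)) on [0,1] satisfies φ_s(0) = e^{−(1+s)} > 0, φ_s(1) = 1, is strictly increasing and strictly convex on [0,1], and since φ_s'(0) < 1 and φ_s'(1) = 1 + s/(1−F(s)) > 1, it has exactly one fixed point x*(s) in the open interval (0,1). -/
open Real Set Filter Topology

lemma hasDerivAt_phi (s c x : ℝ) (hv : 1 - c*x ≠ 0) :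
    HasDerivAt (fun x => Real.exp (-(1-x)*(s/(1-c*x)+1)))
      ((s*(1-c)/(1-c*x)^2 + 1) * Real.exp (-(1-x)*(s/(1-c*x)+1))) x := by
  have h1 : HasDerivAt (fun x : ℝ => 1 - c*x) (-c) x := by
    exact ((hasDerivAt_const x (1:ℝ)).sub ((hasDerivAt_id x).const_mul c)).congr_deriv (by ring)
  have h2 : HasDerivAt (fun x : ℝ => s/(1-c*x)+1)
      ((0 * (1-c*x) - s * (-c))/(1-c*x)^2) x :=
    (((hasDerivAt_const x s).div h1 hv)).add_const 1
  have h3 : HasDerivAt (fun x : ℝ => -(1-x)) 1 x := by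
    exact (((hasDerivAt_const x (1:ℝ)).sub (hasDerivAt_id x)).neg).congr_deriv (by ring)
  have h4 := (h3.mul h2).exp
  convert h4 using 1
  · rfl
  simp only [Pi.mul_apply]
  field_simp
  ring

/-- For `s > 0` and `c = F(s) ∈ [0,1)`, the function
`φ_s(x) = exp(−(1−x)(s/(1−cx) + 1))` satisfies `φ_s(0) = e^{−(1+s)} > 0`, `φ_s(1) = 1`,
is strictly increasing and strictly convex on `[0,1]`, has `φ_s'(0) < 1` and
`φ_s'(1) = 1 + s/(1−c) > 1`, and has exactly one fixed point in `(0,1)`. -/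
theorem uniform_spanning_tree_fixed_point_unique
    (s c : ℝ) (hs : 0 < s) (hc0 : 0 ≤ c) (hc1 : c < 1) :
    let φ : ℝ → ℝ := fun x => Real.exp (-(1 - x) * (s / (1 - c * x) + 1))
    φ 0 = Real.exp (-(1 + s)) ∧ 0 < φ 0 ∧ φ 1 = 1 ∧
    StrictMonoOn φ (Set.Icc 0 1) ∧ StrictConvexOn ℝ (Set.Icc 0 1) φ ∧
    deriv φ 0 < 1 ∧ deriv φ 1 = 1 + s / (1 - c) ∧ 1 < deriv φ 1 ∧
    ∃! x, x ∈ Set.Ioo (0 : ℝ) 1 ∧ φ x = x := by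
  intro φ
  -- positivity of denominator on [0,1]
  have hden : ∀ x ∈ Icc (0:ℝ) 1, 0 < 1 - c * x := by
    intro x hx
    nlinarith [hx.1, hx.2]
  have hD : ∀ x ∈ Icc (0:ℝ) 1, HasDerivAt φ ((s*(1-c)/(1-c*x)^2 + 1) * φ x) x := by
    intro x hx
    exact hasDerivAt_phi s c x (hden x hx).ne'
  have hcont : ContinuousOn φ (Icc 0 1) := fun x hx =>
    ((hD x hx).continuousAt).continuousWithinAt
  -- deriv positive and formula
  have hderiv_eq : ∀ x ∈ Icc (0:ℝ) 1, deriv φ x = (s*(1-c)/(1-c*x)^2 + 1) * φ x := by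
    intro x hx; exact (hD x hx).deriv
  have hApos : ∀ x : ℝ, 0 < s*(1-c)/(1-c*x)^2 + 1 := by
    intro x
    have hnum : 0 ≤ s*(1-c) := by nlinarith
    have : 0 ≤ s*(1-c)/(1-c*x)^2 := div_nonneg hnum (sq_nonneg _)
    linarith
  have hφpos : ∀ x : ℝ, 0 < φ x := fun x => Real.exp_pos _
  have hdpos : ∀ x ∈ Icc (0:ℝ) 1, 0 < deriv φ x := by
    intro x hx
    rw [hderiv_eq x hx]
    exact mul_pos (hApos x) (hφpos x)
  have hmono : StrictMonoOn φ (Icc 0 1) := by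
    apply strictMonoOn_of_deriv_pos (convex_Icc 0 1) hcont
    intro x hx
    rw [interior_Icc] at hx
    exact hdpos x (Ioo_subset_Icc_self hx)
  -- deriv strictly mono on interior → strict convexity
  have hA_mono : ∀ x ∈ Icc (0:ℝ) 1, ∀ y ∈ Icc (0:ℝ) 1, x ≤ y →
      s*(1-c)/(1-c*x)^2 + 1 ≤ s*(1-c)/(1-c*y)^2 + 1 := by
    intro x hx y hy hxy
    have h1 : 0 < 1 - c*y := hden y hy
    have h2 : 1 - c*y ≤ 1 - c*x := by nlinarith
    have : (1-c*y)^2 ≤ (1-c*x)^2 := by nlinarith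
    have hnum : 0 ≤ s*(1-c) := by nlinarith
    have := div_le_div_of_nonneg_left hnum (by positivity : (0:ℝ) < (1-c*y)^2) this
    linarith
  have hconv : StrictConvexOn ℝ (Icc 0 1) φ := by
    apply StrictMonoOn.strictConvexOn_of_deriv (convex_Icc 0 1) hcont
    rw [interior_Icc]
    intro x hx y hy hxy
    have hx' : x ∈ Icc (0:ℝ) 1 := Ioo_subset_Icc_self hx
    have hy' : y ∈ Icc (0:ℝ) 1 := Ioo_subset_Icc_self hy
    rw [hderiv_eq x hx', hderiv_eq y hy']
    calc (s*(1-c)/(1-c*x)^2 + 1) * φ x < (s*(1-c)/(1-c*x)^2 + 1) * φ y :=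
          mul_lt_mul_of_pos_left (hmono hx' hy' hxy) (hApos x)
      _ ≤ (s*(1-c)/(1-c*y)^2 + 1) * φ y :=
          mul_le_mul_of_nonneg_right (hA_mono x hx' y hy' hxy.le) (hφpos y).le
  -- values
  have hφ0 : φ 0 = Real.exp (-(1+s)) := by
    show Real.exp _ = _
    rw [Real.exp_eq_exp]
    norm_num
    ring
  have hφ1 : φ 1 = 1 := by
    show Real.exp _ = 1
    norm_num
  -- deriv at 0
  have hd0 : deriv φ 0 = (s*(1-c) + 1) * Real.exp (-(1+s)) := by
    rw [hderiv_eq 0 (by norm_num), hφ0]; norm_num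
  have hd0lt : deriv φ 0 < 1 := by
    rw [hd0]
    have h1 : s*(1-c) + 1 ≤ s + 1 := by nlinarith
    have h2 : 1 + s < Real.exp (1+s) := by
      have := Real.add_one_lt_exp (by positivity : (1:ℝ)+s ≠ 0)
      linarith
    have hE : 0 < Real.exp (-(1+s)) := Real.exp_pos _
    have : (s+1) * Real.exp (-(1+s)) < 1 := by
      rw [Real.exp_neg]
      rw [mul_inv_lt_iff₀ (Real.exp_pos _)]
      linarith
    nlinarith
  -- deriv at 1
  have h1c : (0:ℝ) < 1 - c := by linarith
  have hd1 : deriv φ 1 = 1 + s / (1-c) := by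
    rw [hderiv_eq 1 (by norm_num), hφ1]
    field_simp
    ring
  have hd1gt : 1 < deriv φ 1 := by
    rw [hd1]
    have : 0 < s / (1-c) := by positivity
    linarith
  refine ⟨hφ0, hφpos 0, hφ1, hmono, hconv, hd0lt, hd1, hd1gt, ?_⟩
  -- fixed point
  -- uniqueness helper: no two fixed points with a < b in Ioo 0 1
  have key : ∀ a ∈ Ioo (0:ℝ) 1, ∀ b ∈ Ioo (0:ℝ) 1, a < b → φ a = a → φ b ≠ b := by
    intro a ha b hb hab hfa hfb
    set t : ℝ := (b - a)/(1 - a) with ht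
    have ha1 : a < 1 := ha.2
    have htpos : 0 < t := by
      apply div_pos <;> linarith
    have ht1 : 0 < 1 - t := by
      rw [ht]
      have : (b-a)/(1-a) < 1 := (div_lt_one (by linarith)).2 (by linarith [hb.2])
      linarith
    have hne : (1:ℝ) - a ≠ 0 := by linarith
    have hcomb : (1-t) * a + t * 1 = b := by
      rw [ht]
      field_simp
      ring
    have := hconv.2 (Ioo_subset_Icc_self ha) (right_mem_Icc.2 zero_le_one)
      (by linarith [ha.2] : a ≠ 1) ht1 htpos (by ring)
    simp only [smul_eq_mul] at this
    rw [hcomb, hfa, hφ1] at this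
    rw [hfb] at this
    nlinarith
  -- existence: find y < 1 with φ y < y
  have hψD : HasDerivAt (fun x => φ x - x) (deriv φ 1 - 1) 1 :=
    (hD 1 (by norm_num)).sub (hasDerivAt_id 1) |>.congr_deriv (by rw [hderiv_eq 1 (by norm_num)])
  have hslope := hasDerivAt_iff_tendsto_slope.1 hψD
  have hpos : 0 < deriv φ 1 - 1 := by linarith
  have hev : ∀ᶠ y in 𝓝[≠] (1:ℝ), 0 < slope (fun x => φ x - x) 1 y :=
    hslope.eventually (eventually_gt_nhds hpos)
  have hev2 : ∀ᶠ y in 𝓝[<] (1:ℝ), 0 < slope (fun x => φ x - x) 1 y :=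
    hev.filter_mono (nhdsWithin_mono 1 fun y hy => ne_of_lt hy)
  have hev3 : ∀ᶠ y in 𝓝[<] (1:ℝ), y ∈ Ioo (0:ℝ) 1 :=
    Ioo_mem_nhdsLT_of_mem (by norm_num : (1:ℝ) ∈ Ioc (0:ℝ) 1)
  obtain ⟨y, hy1, hy2⟩ := (hev2.and hev3).exists
  have hφy : φ y < y := by
    have hsl : slope (fun x => φ x - x) 1 y = (φ y - y) / (y - 1) := by
      rw [slope_def_field]
      simp [hφ1]
    rw [hsl] at hy1
    have hy1' : y - 1 < 0 := by linarith [hy2.2]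
    by_contra h
    push_neg at h
    have : (φ y - y) / (y - 1) ≤ 0 := div_nonpos_of_nonneg_of_nonpos (by linarith) hy1'.le
    linarith
  -- IVT on [0, y]
  have hsub : Icc (0:ℝ) y ⊆ Icc 0 1 := Icc_subset_Icc le_rfl hy2.2.le
  have hcont2 : ContinuousOn (fun x => φ x - x) (Icc 0 y) :=
    (hcont.mono hsub).sub continuousOn_id
  have h0 : (0:ℝ) ∈ Ioo ((fun x => φ x - x) y) ((fun x => φ x - x) 0) := by
    constructor
    · simpa using sub_neg.2 hφy
    · simpa using hφpos 0
  obtain ⟨r, hr, hr0⟩ := intermediate_value_Ioo' hy2.1.le hcont2 h0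
  have hrIoo : r ∈ Ioo (0:ℝ) 1 := ⟨hr.1, lt_trans hr.2 hy2.2⟩
  have hrfix : φ r = r := by linarith [sub_eq_zero.1 hr0]
  refine ⟨r, ⟨hrIoo, hrfix⟩, ?_⟩
  rintro z ⟨hz, hzfix⟩
  rcases lt_trichotomy z r with h | h | h
  · exact absurd hrfix (key z hz r hrIoo h hzfix)
  · exact h
  · exact absurd hzfix (key r hrIoo z hz h hrfix)
end

section
/- In a finite connected graph with distinct edge weights, an edge e = (u,v) belongs to the (unique) minimum spanning tree if and only if, after removing from the graph all edges whose weight is at least the weight of e, the vertices u and v lie in different connected components. -/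
/-- Total weight of the edges of a subgraph `T`, for edge weights `ℓ`. -/
noncomputable def subgraphWeight {V : Type*} [Fintype V]
    (T : SimpleGraph V) (ℓ : Sym2 V → ℝ) : ℝ :=
  ∑ e : Sym2 V, Set.indicator T.edgeSet ℓ e

open SimpleGraph

private lemma edge_le_of_adj {V : Type*} {G : SimpleGraph V} {x y : V} (h : G.Adj x y) :
    SimpleGraph.edge x y ≤ G := by
  intro a b hab
  rw [edge_adj] at hab
  rcases hab.1 with ⟨rfl, rfl⟩ | ⟨rfl, rfl⟩
  · exact h
  · exact h.symm

/-- In a tree, removing an edge, every vertex still reaches one of its endpoints. -/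
private lemma reach_side {V : Type*} {T : SimpleGraph V} (a b : V) :
    ∀ {z : V}, T.Walk z a →
      (T.deleteEdges {s(a, b)}).Reachable z a ∨ (T.deleteEdges {s(a, b)}).Reachable z b := by
  intro z p
  induction p with
  | nil => exact Or.inl Reachable.rfl
  | @cons x y c h _ ih =>
    by_cases hxy : s(x, y) = s(c, b)
    · rw [Sym2.eq_iff] at hxy
      rcases hxy with ⟨rfl, rfl⟩ | ⟨rfl, rfl⟩
      · exact Or.inl Reachable.rfl
      · exact Or.inr Reachable.rfl
    · have hadj : (T.deleteEdges {s(c, b)}).Adj x y := by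
        rw [SimpleGraph.deleteEdges_adj]
        exact ⟨h, hxy⟩
      rcases ih with h' | h'
      · exact Or.inl (hadj.reachable.trans h')
      · exact Or.inr (hadj.reachable.trans h')

/-- Edge exchange: removing an edge of a tree and adding an edge between the two resulting
components yields a tree. -/
private lemma swap_isTree {V : Type*} {T : SimpleGraph V} (hT : T.IsTree) {a b x y : V}
    (hab : T.Adj a b) (hxy : ¬ (T.deleteEdges {s(a, b)}).Reachable x y) :
    (T.deleteEdges {s(a, b)} ⊔ SimpleGraph.edge x y).IsTree := by
  classical
  have hne : x ≠ y := fun h => hxy (h ▸ Reachable.rfl)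
  have hle : T.deleteEdges {s(a, b)} ≤ T.deleteEdges {s(a, b)} ⊔ SimpleGraph.edge x y :=
    le_sup_left
  have hadjxy : (T.deleteEdges {s(a, b)} ⊔ SimpleGraph.edge x y).Adj x y := by
    rw [sup_adj, edge_adj]
    exact Or.inr ⟨Or.inl ⟨rfl, rfl⟩, hne⟩
  have hside : ∀ z : V, (T.deleteEdges {s(a, b)}).Reachable z a ∨
      (T.deleteEdges {s(a, b)}).Reachable z b := by
    intro z
    obtain ⟨p⟩ := hT.isConnected.preconnected z a
    exact reach_side a b p
  have hab' : (T.deleteEdges {s(a, b)} ⊔ SimpleGraph.edge x y).Reachable a b := by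
    rcases hside x with hx | hx <;> rcases hside y with hy | hy
    · exact absurd (hx.trans hy.symm) hxy
    · exact ((hx.mono hle).symm.trans hadjxy.reachable).trans (hy.mono hle)
    · exact ((hy.mono hle).symm.trans hadjxy.reachable.symm).trans (hx.mono hle)
    · exact absurd (hx.trans hy.symm) hxy
  have hconn : (T.deleteEdges {s(a, b)} ⊔ SimpleGraph.edge x y).Connected := by
    rw [connected_iff]
    refine ⟨fun z w => ?_, hT.isConnected.nonempty⟩
    have key : ∀ z : V, (T.deleteEdges {s(a, b)} ⊔ SimpleGraph.edge x y).Reachable z a := by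
      intro z
      rcases hside z with h | h
      · exact h.mono hle
      · exact (h.mono hle).trans hab'.symm
    exact (key z).trans (key w).symm
  refine ⟨hconn, ?_⟩
  intro z c hc
  by_cases he : s(x, y) ∈ c.edges
  · have hreach := (adj_and_reachable_delete_edges_iff_exists_cycle.mpr ⟨z, c, hc, he⟩).2
    have hle2 : (T.deleteEdges {s(a, b)} ⊔ SimpleGraph.edge x y) \ fromEdgeSet {s(x, y)} ≤
        T.deleteEdges {s(a, b)} := by
      have h1 : (T.deleteEdges {s(a, b)} ⊔ SimpleGraph.edge x y) \ SimpleGraph.edge x y =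
          T.deleteEdges {s(a, b)} \ SimpleGraph.edge x y := sup_sdiff_right_self
      calc (T.deleteEdges {s(a, b)} ⊔ SimpleGraph.edge x y) \ fromEdgeSet {s(x, y)}
          = T.deleteEdges {s(a, b)} \ SimpleGraph.edge x y := h1
        _ ≤ T.deleteEdges {s(a, b)} := sdiff_le
    exact hxy (hreach.mono hle2)
  · have hsub : ∀ e ∈ c.edges, e ∈ T.edgeSet := by
      intro e hec
      have hmem := c.edges_subset_edgeSet hec
      rw [edgeSet_sup, edge_edgeSet_of_ne hne] at hmem
      rcases hmem with h | h
      · rw [edgeSet_deleteEdges] at h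
        exact h.1
      · rw [Set.mem_singleton_iff] at h
        exact absurd (h ▸ hec) he
    exact hT.2 (c.transfer T hsub) (hc.transfer hsub)

private lemma swap_edgeSet {V : Type*} {T : SimpleGraph V} (a b : V) {x y : V}
    (hne : x ≠ y) :
    (T.deleteEdges {s(a, b)} ⊔ SimpleGraph.edge x y).edgeSet =
      (T.edgeSet \ {s(a, b)}) ∪ {s(x, y)} := by
  rw [edgeSet_sup, edgeSet_deleteEdges, edge_edgeSet_of_ne hne]

private lemma subgraphWeight_swap {V : Type*} [Fintype V] [DecidableEq V]
    {T T' : SimpleGraph V} {e f : Sym2 V} (ℓ : Sym2 V → ℝ)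
    (he : e ∈ T.edgeSet) (hf : f ∉ T.edgeSet)
    (hE : T'.edgeSet = (T.edgeSet \ {e}) ∪ {f}) :
    subgraphWeight T' ℓ = subgraphWeight T ℓ - ℓ e + ℓ f := by
  classical
  have hef : e ≠ f := fun h => hf (h ▸ he)
  have key : ∀ g : Sym2 V,
      Set.indicator T'.edgeSet ℓ g =
        Set.indicator T.edgeSet ℓ g - (if g = e then ℓ e else 0) +
          (if g = f then ℓ f else 0) := by
    intro g
    by_cases hge : g = e
    · subst hge
      rw [Set.indicator_of_notMem (by rw [hE]; simp [hef]), Set.indicator_of_mem he]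
      simp [hef]
    · by_cases hgf : g = f
      · subst hgf
        rw [Set.indicator_of_mem (by rw [hE]; simp), Set.indicator_of_notMem hf]
        simp [hge]
      · have hiff : g ∈ T'.edgeSet ↔ g ∈ T.edgeSet := by rw [hE]; simp [hge, hgf]
        by_cases hg : g ∈ T.edgeSet
        · rw [Set.indicator_of_mem (hiff.mpr hg), Set.indicator_of_mem hg]
          simp [hge, hgf]
        · rw [Set.indicator_of_notMem (fun h => hg (hiff.mp h)), Set.indicator_of_notMem hg]
          simp [hge, hgf]
  unfold subgraphWeight
  simp_rw [key]
  rw [Finset.sum_add_distrib, Finset.sum_sub_distrib]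
  simp

private lemma cross_lemma {V : Type*} {H D : SimpleGraph V} {v : V} :
    ∀ {z : V}, H.Walk z v →
      D.Reachable z v ∨ ∃ x y : V, H.Adj x y ∧ ¬ D.Reachable x y := by
  intro z p
  induction p with
  | nil => exact Or.inl Reachable.rfl
  | @cons x y c h _ ih =>
    rcases ih with h' | h'
    · by_cases hxy : D.Reachable x y
      · exact Or.inl (hxy.trans h')
      · exact Or.inr ⟨x, y, h, hxy⟩
    · exact Or.inr h'

/-- In a finite connected graph with distinct edge weights, an edge `e = (u,v)` belongs
to the minimum spanning tree iff, after removing all edges of weight at least `ℓ(e)`,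
the vertices `u` and `v` lie in different connected components. -/
theorem mst_cut_characterization {V : Type*} [Fintype V] [DecidableEq V]
    (G : SimpleGraph V) (hG : G.Connected)
    (ℓ : Sym2 V → ℝ) (hℓ : Set.InjOn ℓ G.edgeSet)
    (T : SimpleGraph V) (hTG : T ≤ G) (hT : T.IsTree)
    (hmin : ∀ T' : SimpleGraph V, T' ≤ G → T'.IsTree →
      subgraphWeight T ℓ ≤ subgraphWeight T' ℓ)
    (u v : V) (huv : G.Adj u v) :
    T.Adj u v ↔
      ¬ (G.deleteEdges {e | ℓ s(u, v) ≤ ℓ e}).Reachable u v := by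
  classical
  constructor
  · intro hTuv hreach
    have hbr : ¬ (T.deleteEdges {s(u, v)}).Reachable u v := by
      have hb := (isAcyclic_iff_forall_adj_isBridge.mp hT.2) hTuv
      exact isBridge_iff.mp hb
    obtain ⟨p⟩ := hreach
    rcases cross_lemma (D := T.deleteEdges {s(u, v)}) p with hcon | ⟨x, y, hxyH, hxyD⟩
    · exact hbr hcon
    · rw [deleteEdges_adj, Set.mem_setOf_eq] at hxyH
      obtain ⟨hxyG, hflt'⟩ := hxyH
      have hflt : ℓ s(x, y) < ℓ s(u, v) := not_le.mp hflt'
      have hfne : s(x, y) ∉ T.edgeSet := by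
        intro hmem
        apply hxyD
        have hadj : (T.deleteEdges {s(u, v)}).Adj x y := by
          rw [deleteEdges_adj]
          refine ⟨(mem_edgeSet _).mp hmem, ?_⟩
          simp only [Set.mem_singleton_iff]
          intro hEq
          rw [hEq] at hflt
          exact lt_irrefl _ hflt
        exact hadj.reachable
      have hT' := swap_isTree hT hTuv hxyD
      have hT'le : (T.deleteEdges {s(u, v)} ⊔ SimpleGraph.edge x y) ≤ G :=
        sup_le ((deleteEdges_le _).trans hTG) (edge_le_of_adj hxyG)
      have hW := subgraphWeight_swap ℓ ((mem_edgeSet _).mpr hTuv) hfne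
        (swap_edgeSet u v hxyG.ne)
      have hmin' := hmin _ hT'le hT'
      rw [hW] at hmin'
      linarith
  · intro hnr
    by_contra hTuv
    have hfne : s(u, v) ∉ T.edgeSet := fun h => hTuv ((mem_edgeSet _).mp h)
    obtain ⟨p0⟩ := hT.isConnected.preconnected u v
    have hExists : ∃ a b : V, s(a, b) ∈ (p0.toPath : T.Walk u v).edges ∧
        ℓ s(u, v) ≤ ℓ s(a, b) := by
      by_contra hno
      push_neg at hno
      apply hnr
      refine ⟨(p0.toPath : T.Walk u v).transfer _ ?_⟩
      intro e he
      have heT : e ∈ T.edgeSet := (p0.toPath : T.Walk u v).edges_subset_edgeSet he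
      rw [edgeSet_deleteEdges]
      refine ⟨edgeSet_mono hTG heT, fun hmem => ?_⟩
      rw [Set.mem_setOf_eq] at hmem
      revert he hmem
      induction e using Sym2.ind with
      | _ a b => exact fun he hmem => absurd hmem (not_le.mpr (hno a b he))
    obtain ⟨a, b, habP, hwle⟩ := hExists
    have habT : T.Adj a b :=
      (mem_edgeSet _).mp ((p0.toPath : T.Walk u v).edges_subset_edgeSet habP)
    have habG : G.Adj a b := hTG habT
    have hne' : s(a, b) ≠ s(u, v) := fun h => hfne (h ▸ (mem_edgeSet _).mpr habT)
    have hlt : ℓ s(u, v) < ℓ s(a, b) := by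
      refine lt_of_le_of_ne hwle fun h => ?_
      exact hne' (hℓ ((mem_edgeSet _).mpr habG) ((mem_edgeSet _).mpr huv) h.symm)
    have hkey : ¬ (T.deleteEdges {s(a, b)}).Reachable u v := by
      rintro ⟨q⟩
      have hq : ∀ e ∈ q.edges, e ∈ T.edgeSet := by
        intro e he
        have hmem := q.edges_subset_edgeSet he
        rw [edgeSet_deleteEdges] at hmem
        exact hmem.1
      have hq2 : s(a, b) ∉ (q.transfer T hq).edges := by
        rw [Walk.edges_transfer]
        intro hmem
        have hmem' := q.edges_subset_edgeSet hmem
        rw [edgeSet_deleteEdges] at hmem'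
        exact hmem'.2 rfl
      have huniq := hT.2.path_unique p0.toPath (q.transfer T hq).toPath
      apply hq2
      apply Walk.edges_toPath_subset
      rw [← huniq]
      exact habP
    have hT' := swap_isTree hT habT hkey
    have hT'le : (T.deleteEdges {s(a, b)} ⊔ SimpleGraph.edge u v) ≤ G :=
      sup_le ((deleteEdges_le _).trans hTG) (edge_le_of_adj huv)
    have hW := subgraphWeight_swap ℓ ((mem_edgeSet _).mpr habT) hfne
      (swap_edgeSet a b huv.ne)
    have hmin' := hmin _ hT'le hT'
    rw [hW] at hmin'
    linarith
end
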